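/- Let T = {[(x_1,...,x_s)] ∈ P^{s-1} : x_i ∈ K* for all i} be a projective torus over the finite field K = F_q. Then the vanishing ideal of T is I(T) = (t_2^{q-1} - t_1^{q-1}, t_3^{q-1} - t_1^{q-1}, ..., t_s^{q-1} - t_1^{q-1}), the ideal of S = K[t_1,...,t_s] generated by the binomials t_i^{q-1} - t_1^{q-1} for i = 2,...,s. -/

import Mathlib

noncomputable section

open scoped BigOperators

/-- The vanishing ideal `I(Y)` of a set `Y` of points in projective space: the ideal
generated by the homogeneous polynomials vanishing at every point of `Y`. -/
def vanishingIdeal (K : Type*) [Field K] {s : ℕ}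
    (Y : Set (Projectivization K (Fin s → K))) : Ideal (MvPolynomial (Fin s) K) :=
  Ideal.span {f | (∃ d, f.IsHomogeneous d) ∧ ∀ P ∈ Y, MvPolynomial.eval P.rep f = 0}

/-- The Hilbert function `d ↦ dim_K (S/I)_d` of the standard graded quotient `S/I`. -/
def hilbertFunction {K : Type*} [Field K] {s : ℕ}
    (I : Ideal (MvPolynomial (Fin s) K)) (d : ℕ) : ℕ :=
  Module.finrank K ((MvPolynomial.homogeneousSubmodule (Fin s) K d).map
    (Ideal.Quotient.mkₐ K I).toLinearMap)

/-- The index of regularity of `S/I(Y)`: the least `p ≥ 0` such that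
`H_Y(d) = |Y|` for all `d ≥ p`. -/
def regIndex {K : Type*} [Field K] {s : ℕ}
    (Y : Set (Projectivization K (Fin s → K))) : ℕ :=
  sInf {p : ℕ | ∀ d, p ≤ d → hilbertFunction (vanishingIdeal K Y) d = Y.ncard}

/-- The algebraic toric set in `P^{s-1}` parameterized by the monomials `y^{v_1},…,y^{v_s}`. -/
def toricSet (K : Type*) [Field K] {n s : ℕ} (v : Fin s → Fin n → ℕ) :
    Set (Projectivization K (Fin s → K)) :=
  {P | ∃ x : Fin n → K, (∀ j, x j ≠ 0) ∧
      ∃ h : (fun i : Fin s => ∏ j, x j ^ v i j) ≠ 0,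
        P = Projectivization.mk K (fun i : Fin s => ∏ j, x j ^ v i j) h}

/-- The projective torus in `P^{s-1}`: the points all of whose coordinates are nonzero. -/
def projTorus (K : Type*) [Field K] (s : ℕ) : Set (Projectivization K (Fin s → K)) :=
  {P | ∀ i, P.rep i ≠ 0}

/-- The parameterized (evaluation) code `C_Y(d)`: the image of the degree-`d` evaluation map
`f ↦ (f(P)/t_1^d(P))_{P ∈ Y}`. -/
def evalCode (K : Type*) [Field K] {s : ℕ} [NeZero s]
    (Y : Set (Projectivization K (Fin s → K))) (d : ℕ) : Set (Y → K) :=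
  {w | ∃ f ∈ MvPolynomial.homogeneousSubmodule (Fin s) K d,
      w = fun P : Y => MvPolynomial.eval (P : Projectivization K (Fin s → K)).rep f /
        ((P : Projectivization K (Fin s → K)).rep 0) ^ d}

/-- The minimum distance of a code: the least number of nonzero entries of a
nonzero codeword. -/
def minDist {K : Type*} [Field K] {ι : Type*} (C : Set (ι → K)) : ℕ :=
  sInf {m | ∃ w ∈ C, w ≠ 0 ∧ m = {i | w i ≠ 0}.ncard}

/-- `v 1,…,v s` are the characteristic vectors of the edges of a clutter: all the entries
are in `{0,1}` and no edge (support) is contained in another. -/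
def IsClutter {n s : ℕ} (v : Fin s → Fin n → ℕ) : Prop :=
  (∀ i j, v i j ≤ 1) ∧ ∀ i k : Fin s, i ≠ k → ∃ j, v i j ≠ 0 ∧ v k j = 0

/-- An ideal of `K[t_1,…,t_s]` is a complete intersection if it can be generated by `s-1`
homogeneous polynomials. -/
def IsCompleteIntersection {K : Type*} [Field K] {s : ℕ}
    (I : Ideal (MvPolynomial (Fin s) K)) : Prop :=
  ∃ g : Fin (s - 1) → MvPolynomial (Fin s) K,
    (∀ i, ∃ d, (g i).IsHomogeneous d) ∧ Ideal.span (Set.range g) = I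

end

open MvPolynomial Finset

noncomputable section Helpers

variable {K : Type*} [Field K] {s : ℕ}

/-- The span of the binomials `X i ^ m - X z ^ m`. -/
abbrev torusBinomialSpan (K : Type*) [Field K] {s : ℕ} (z : Fin s) (m : ℕ) :
    Ideal (MvPolynomial (Fin s) K) :=
  Ideal.span {f | ∃ i, i ≠ z ∧ f = X i ^ m - X z ^ m}

lemma mem_J_pow (z : Fin s) (m : ℕ) (i : Fin s) (k : ℕ) :
    (X i ^ (m * k) - X z ^ (m * k) : MvPolynomial (Fin s) K) ∈ torusBinomialSpan K z m := by
  by_cases hi : i = z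
  · simp [hi]
  · obtain ⟨c, hc⟩ : (X i ^ m - X z ^ m : MvPolynomial (Fin s) K) ∣
        X i ^ (m * k) - X z ^ (m * k) := by
      rw [pow_mul, pow_mul]; exact sub_dvd_pow_sub_pow (X i ^ m : MvPolynomial (Fin s) K) (X z ^ m) k
    rw [hc]
    exact Ideal.mul_mem_right _ _ (Ideal.subset_span ⟨i, hi, rfl⟩)

lemma mem_J_prod (z : Fin s) (m : ℕ) (S : Finset (Fin s)) (k : Fin s → ℕ) :
    ((∏ i ∈ S, X i ^ (m * k i)) - X z ^ (m * ∑ i ∈ S, k i) : MvPolynomial (Fin s) K) ∈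
      torusBinomialSpan K z m := by
  classical
  induction S using Finset.induction_on with
  | empty => simp
  | @insert j S hj ih =>
    rw [Finset.prod_insert hj, Finset.sum_insert hj]
    have key : (X j ^ (m * k j) * ∏ i ∈ S, X i ^ (m * k i))
        - X z ^ (m * (k j + ∑ i ∈ S, k i))
        = X j ^ (m * k j) * ((∏ i ∈ S, X i ^ (m * k i)) - X z ^ (m * ∑ i ∈ S, k i))
          + ((X j ^ (m * k j) - X z ^ (m * k j)) * X z ^ (m * ∑ i ∈ S, k i) :
            MvPolynomial (Fin s) K) := by
      rw [Nat.mul_add, pow_add]; ring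
    rw [key]
    exact Ideal.add_mem _ (Ideal.mul_mem_left _ _ ih)
      (Ideal.mul_mem_right _ _ (mem_J_pow z m j (k j)))

lemma prod_X_pow_eq (S : Finset (Fin s)) (g : Fin s → ℕ) :
    (∏ i ∈ S, (X i ^ g i : MvPolynomial (Fin s) K)) =
      monomial (∑ i ∈ S, Finsupp.single i (g i)) 1 := by
  classical
  induction S using Finset.induction_on with
  | empty => simp
  | @insert j S hj ih =>
    rw [Finset.prod_insert hj, Finset.sum_insert hj, ih, X_pow_eq_monomial, monomial_mul, one_mul]


/-- Reduce the exponent vector: for `i ≠ z` take `a i % m`, dumping the excess onto `z`. -/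
def redExp (z : Fin s) (m : ℕ) (a : Fin s →₀ ℕ) : Fin s →₀ ℕ :=
  Finsupp.equivFunOnFinite.symm
    (fun i => if i = z then a z + m * ∑ j ∈ univ.erase z, a j / m else a i % m)

lemma redExp_apply (z : Fin s) (m : ℕ) (a : Fin s →₀ ℕ) (i : Fin s) :
    redExp z m a i = if i = z then a z + m * ∑ j ∈ univ.erase z, a j / m else a i % m := rfl

lemma degree_univ (d : Fin s →₀ ℕ) : d.degree = ∑ i, d i :=
  Finset.sum_subset (subset_univ _) fun i _ hi => Finsupp.notMem_support_iff.mp hi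

lemma redExp_degree (z : Fin s) (m : ℕ) (a : Fin s →₀ ℕ) :
    (redExp z m a).degree = a.degree := by
  rw [degree_univ, degree_univ]
  rw [← Finset.sum_erase_add univ _ (mem_univ z), ← Finset.sum_erase_add univ a (mem_univ z)]
  have h1 : ∑ i ∈ univ.erase z, redExp z m a i = ∑ i ∈ univ.erase z, a i % m :=
    Finset.sum_congr rfl fun i hi => by
      rw [redExp_apply, if_neg (Finset.mem_erase.mp hi).1]
  have h2 : redExp z m a z = a z + m * ∑ j ∈ univ.erase z, a j / m := by
    rw [redExp_apply, if_pos rfl]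
  rw [h1, h2, mul_sum]
  have : ∑ i ∈ univ.erase z, a i % m + (a z + ∑ i ∈ univ.erase z, m * (a i / m))
      = (∑ i ∈ univ.erase z, (a i % m + m * (a i / m))) + a z := by
    rw [Finset.sum_add_distrib]; ring
  rw [this]
  congr 1
  exact Finset.sum_congr rfl fun i _ => Nat.mod_add_div (a i) m

lemma redExp_lt (z : Fin s) {m : ℕ} (hm : 0 < m) (a : Fin s →₀ ℕ) {i : Fin s} (hi : i ≠ z) :
    redExp z m a i < m := by
  rw [redExp_apply, if_neg hi]; exact Nat.mod_lt _ hm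

lemma monomial_sub_red_mem (z : Fin s) (m : ℕ) (a : Fin s →₀ ℕ) :
    (monomial a 1 - monomial (redExp z m a) 1 : MvPolynomial (Fin s) K) ∈
      torusBinomialSpan K z m := by
  classical
  set b : Fin s →₀ ℕ :=
    Finsupp.equivFunOnFinite.symm (fun i => if i = z then a z else a i % m) with hb
  have hbapp : ∀ i, b i = if i = z then a z else a i % m := fun i => rfl
  have h1 : (monomial a 1 : MvPolynomial (Fin s) K)
      = (∏ i ∈ univ.erase z, X i ^ (m * (a i / m))) * monomial b 1 := by
    have hc : (∑ i ∈ univ.erase z, Finsupp.single i (m * (a i / m))) + b = a := by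
      ext i
      rw [Finsupp.add_apply, Finsupp.finset_sum_apply]
      simp only [Finsupp.single_apply]
      rw [Finset.sum_ite_eq' (univ.erase z) i fun j => m * (a j / m), hbapp]
      by_cases hi : i = z
      · simp [hi]
      · rw [if_pos (Finset.mem_erase.mpr ⟨hi, mem_univ i⟩), if_neg hi, Nat.div_add_mod]
    rw [prod_X_pow_eq, monomial_mul, one_mul, hc]
  have h2 : (monomial (redExp z m a) 1 : MvPolynomial (Fin s) K)
      = X z ^ (m * ∑ j ∈ univ.erase z, a j / m) * monomial b 1 := by
    have hc : Finsupp.single z (m * ∑ j ∈ univ.erase z, a j / m) + b = redExp z m a := by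
      ext i
      rw [Finsupp.add_apply, Finsupp.single_apply, redExp_apply, hbapp]
      by_cases hi : i = z
      · rw [if_pos hi, if_pos hi.symm, if_pos hi, add_comm]
      · rw [if_neg hi, if_neg (fun h => hi h.symm), if_neg hi, zero_add]
    rw [X_pow_eq_monomial, monomial_mul, one_mul, hc]
  rw [h1, h2, ← sub_mul]
  exact Ideal.mul_mem_right _ _ (mem_J_prod z m _ _)


lemma degree_erase_add (z : Fin s) (b : Fin s →₀ ℕ) :
    (b.erase z).degree + b z = b.degree := by
  rw [degree_univ, degree_univ, ← Finset.sum_erase_add univ _ (mem_univ z),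
    ← Finset.sum_erase_add univ (fun i => b i) (mem_univ z), Finsupp.erase_same, add_zero]
  congr 1
  exact Finset.sum_congr rfl fun i hi => Finsupp.erase_ne (Finset.mem_erase.mp hi).1

lemma aeval_subst_monomial (z : Fin s) (d : Fin s →₀ ℕ) (r : K) :
    (aeval fun i => if i = z then 1 else X i : MvPolynomial (Fin s) K →ₐ[K] _)
      (monomial d r) = monomial (d.erase z) r := by
  classical
  rw [aeval_monomial, monomial_eq, algebraMap_eq]
  congr 1
  rw [Finsupp.prod, Finsupp.prod, Finsupp.support_erase]
  have h1 : ∏ i ∈ d.support.erase z, (X i : MvPolynomial (Fin s) K) ^ (d.erase z) i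
      = ∏ i ∈ d.support.erase z, (X i : MvPolynomial (Fin s) K) ^ d i :=
    Finset.prod_congr rfl fun i hi => by
      rw [Finsupp.erase_ne (Finset.mem_erase.mp hi).1]
  rw [h1]
  rw [← Finset.prod_erase d.support
    (f := fun i => (if i = z then 1 else X i : MvPolynomial (Fin s) K) ^ d i) (a := z) (by simp)]
  exact Finset.prod_congr rfl fun i hi => by
    rw [if_neg (Finset.mem_erase.mp hi).1]

lemma eval_aeval_subst (z : Fin s) (g : MvPolynomial (Fin s) K) (x : Fin s → K) :
    eval x ((aeval fun i => if i = z then 1 else X i :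
        MvPolynomial (Fin s) K →ₐ[K] _) g)
      = eval (fun i => if i = z then 1 else x i) g := by
  have : (eval x).comp (aeval fun i => if i = z then 1 else X i :
      MvPolynomial (Fin s) K →ₐ[K] MvPolynomial (Fin s) K).toRingHom
      = eval (fun i => if i = z then 1 else x i) := by
    apply ringHom_ext
    · intro r; simp
    · intro i
      by_cases hi : i = z <;> simp [hi]
  exact RingHom.congr_fun this g


lemma eq_zero_of_eval_eq_zero' [Fintype K] (p : MvPolynomial (Fin s) K)
    (hv : ∀ v : Fin s → K, eval v p = 0)
    (hp : p ∈ restrictDegree (Fin s) K (Fintype.card K - 1)) : p = 0 := by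
  classical
  have hinj : Function.Injective (ULift.up : Fin s → ULift (Fin s)) :=
    fun a b hab => congrArg ULift.down hab
  have h0 : rename (ULift.up : Fin s → ULift (Fin s)) p = 0 := by
    apply eq_zero_of_eval_eq_zero
    · intro v; rw [eval_rename]; exact hv _
    · rw [mem_restrictDegree] at hp ⊢
      intro b hb i
      rw [support_rename_of_injective hinj] at hb
      obtain ⟨a, ha, rfl⟩ := Finset.mem_image.mp hb
      have hval : (Finsupp.mapDomain (ULift.up : Fin s → ULift (Fin s)) a) i = a i.down := by
        have h2 := Finsupp.mapDomain_apply hinj a i.down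
        simpa using h2
      rw [hval]
      exact hp a ha i.down
  exact rename_injective _ hinj (by rw [h0, map_zero])

lemma reduced_homog_zero [Fintype K] (z : Fin s) {d : ℕ} {g : MvPolynomial (Fin s) K}
    (hg : g.IsHomogeneous d)
    (hlt : ∀ a ∈ g.support, ∀ i : Fin s, i ≠ z → a i < Fintype.card K - 1)
    (hvan : ∀ x : Fin s → K, (∀ i, x i ≠ 0) → eval x g = 0) : g = 0 := by
  classical
  set m := Fintype.card K - 1 with hm
  have hm0 : 0 < m := by
    have := Fintype.one_lt_card (α := K)
    omega
  have hdeg : ∀ a ∈ g.support, a.degree = d := fun a ha => by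
    rw [Finsupp.degree_eq_weight_one]
    exact hg (mem_support_iff.mp ha)
  have hinj : ∀ a ∈ g.support, ∀ a' ∈ g.support, a.erase z = a'.erase z → a = a' := by
    intro a ha a' ha' he
    have h1 := degree_erase_add z a
    have h2 := degree_erase_add z a'
    rw [hdeg a ha] at h1
    rw [hdeg a' ha'] at h2
    rw [he] at h1
    have hz : a z = a' z := by omega
    ext i
    by_cases hi : i = z
    · rw [hi, hz]
    · rw [← Finsupp.erase_ne (f := a) hi, ← Finsupp.erase_ne (f := a') hi, he]
  set h : MvPolynomial (Fin s) K := (aeval fun i => if i = z then 1 else X i) g with hh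
  have hrepr : h = ∑ a ∈ g.support, monomial (a.erase z) (coeff a g) := by
    rw [hh]
    conv_lhs => rw [g.as_sum]
    rw [map_sum]
    exact Finset.sum_congr rfl fun a _ => aeval_subst_monomial z a (coeff a g)
  have hhsupp : ∀ b ∈ h.support, ∀ i : Fin s, b i < m := by
    intro b hb i
    rw [hrepr] at hb
    obtain ⟨a, ha, hba⟩ := Finset.mem_biUnion.mp (support_sum hb)
    have hb' : b = a.erase z := by
      by_cases h0 : coeff a g = 0
      · rw [support_monomial, if_pos h0] at hba
        exact absurd hba (Finset.notMem_empty b)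
      · rw [support_monomial, if_neg h0] at hba
        exact Finset.mem_singleton.mp hba
    subst hb'
    by_cases hi : i = z
    · rw [hi, Finsupp.erase_same]; exact hm0
    · rw [Finsupp.erase_ne hi]; exact hlt a ha i hi
  set H := h * ∏ i : Fin s, X i with hHdef
  have hHvan : ∀ x : Fin s → K, eval x H = 0 := by
    intro x
    rw [hHdef, map_mul]
    by_cases hx : ∀ i, x i ≠ 0
    · have h1 : eval x h = 0 := by
        rw [hh, eval_aeval_subst]
        exact hvan _ (fun i => by by_cases hi : i = z <;> simp [hi, hx i])
      rw [h1, zero_mul]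
    · push_neg at hx
      obtain ⟨i, hi⟩ := hx
      have h2 : eval x (∏ j : Fin s, X j) = 0 := by
        rw [map_prod]
        exact Finset.prod_eq_zero (mem_univ i) (by rwa [eval_X])
      rw [h2, mul_zero]
  have hXprod : (∏ j : Fin s, (X j : MvPolynomial (Fin s) K))
      = monomial (∑ j : Fin s, Finsupp.single j 1) 1 := by
    rw [← prod_X_pow_eq univ (fun _ => 1)]
    exact Finset.prod_congr rfl fun j _ => (pow_one _).symm
  have hu : ∀ i : Fin s, (∑ j : Fin s, Finsupp.single j (1 : ℕ)) i = 1 := by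
    intro i
    rw [Finsupp.finset_sum_apply]
    simp only [Finsupp.single_apply]
    rw [Finset.sum_ite_eq' univ i fun _ => 1, if_pos (mem_univ i)]
  have hHdeg : H ∈ restrictDegree (Fin s) K (Fintype.card K - 1) := by
    rw [mem_restrictDegree]
    intro c hc i
    have hc' := support_mul h (∏ j : Fin s, X j) hc
    rw [hXprod, support_monomial, if_neg (one_ne_zero' K)] at hc'
    obtain ⟨b, hb, u, hu', hbu⟩ := Finset.mem_add.mp hc'
    rw [Finset.mem_singleton] at hu'
    subst hu'
    rw [← hbu, Finsupp.add_apply, hu i]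
    have := hhsupp b hb i
    omega
  have hH0 : H = 0 := eq_zero_of_eval_eq_zero' H hHvan hHdeg
  have hprod0 : (∏ j : Fin s, (X j : MvPolynomial (Fin s) K)) ≠ 0 :=
    Finset.prod_ne_zero_iff.mpr fun j _ => X_ne_zero j
  have hh0 : h = 0 := by
    rcases mul_eq_zero.mp (hHdef ▸ hH0) with h0 | h0
    · exact h0
    · exact absurd h0 hprod0
  rw [← support_eq_empty]
  by_contra hne
  obtain ⟨a0, ha0⟩ := Finset.nonempty_iff_ne_empty.mpr hne
  have hco : coeff (a0.erase z) h = coeff a0 g := by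
    rw [hrepr, coeff_sum]
    rw [Finset.sum_eq_single a0]
    · rw [coeff_monomial, if_pos rfl]
    · intro a ha hne'
      rw [coeff_monomial, if_neg (fun he => hne' (hinj a ha a0 ha0 he))]
    · intro h0; exact absurd ha0 h0
  rw [hh0, coeff_zero] at hco
  exact (mem_support_iff.mp ha0) hco.symm


lemma isHomog_eval_smul {n : ℕ} {f : MvPolynomial (Fin s) K} (hf : f.IsHomogeneous n)
    (c : K) (x : Fin s → K) : eval (c • x) f = c ^ n * eval x f := by
  rw [eval_eq, eval_eq, Finset.mul_sum]
  refine Finset.sum_congr rfl fun a ha => ?_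
  have hdeg : ∑ i ∈ a.support, a i = n := by
    have h1 : a.degree = n := by
      rw [Finsupp.degree_eq_weight_one]
      exact hf (mem_support_iff.mp ha)
    rw [← h1]; rfl
  have h2 : ∏ i ∈ a.support, (c • x) i ^ a i
      = c ^ n * ∏ i ∈ a.support, x i ^ a i := by
    have h3 : ∀ i ∈ a.support, (c • x) i ^ a i = c ^ a i * x i ^ a i := fun i _ => by
      rw [Pi.smul_apply, smul_eq_mul, mul_pow]
    rw [Finset.prod_congr rfl h3, Finset.prod_mul_distrib,
      Finset.prod_pow_eq_pow_sum, hdeg]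
  rw [h2]; ring

end Helpers


/-- The vanishing ideal of the projective torus `T ⊆ P^{s-1}` over `F_q`
is generated by the binomials `t_i^{q-1} - t_1^{q-1}`, `i = 2,…,s`. -/
theorem stmt3 {K : Type*} [Field K] [Fintype K] {q s : ℕ}
    (hq : Fintype.card K = q) (hs : 2 ≤ s) :
    vanishingIdeal K (projTorus K s) =
      Ideal.span {f : MvPolynomial (Fin s) K |
        ∃ i : Fin s, i ≠ ⟨0, by omega⟩ ∧
          f = MvPolynomial.X i ^ (q - 1)
            - MvPolynomial.X (⟨0, by omega⟩ : Fin s) ^ (q - 1)} := by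
  classical
  subst hq
  classical
  have hcard : 1 < Fintype.card K := Fintype.one_lt_card
  set z : Fin s := ⟨0, by omega⟩ with hzdef
  set m : ℕ := Fintype.card K - 1 with hm
  have hm0 : 0 < m := by omega
  apply le_antisymm
  · unfold _root_.vanishingIdeal
    rw [Ideal.span_le]
    rintro f ⟨⟨d, hfd⟩, hvan⟩
    have hvan' : ∀ x : Fin s → K, (∀ i, x i ≠ 0) → eval x f = 0 := by
      intro x hx
      have hx0 : x ≠ 0 := fun h0 => hx z (congrFun h0 z)
      obtain ⟨c, hc⟩ := Projectivization.exists_smul_eq_mk_rep K x hx0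
      have hmem : Projectivization.mk K x hx0 ∈ projTorus K s := by
        intro i
        rw [← hc, Pi.smul_apply, Units.smul_def]
        exact mul_ne_zero (Units.ne_zero c) (hx i)
      have h0 := hvan _ hmem
      rw [← hc] at h0
      have hcx : (c • x : Fin s → K) = ((c : K) • x) :=
        funext fun i => by rw [Pi.smul_apply, Pi.smul_apply, Units.smul_def, smul_eq_mul]
      rw [hcx, isHomog_eval_smul hfd] at h0
      exact (mul_eq_zero.mp h0).resolve_left (pow_ne_zero d (Units.ne_zero c))
    set g : MvPolynomial (Fin s) K :=
      ∑ a ∈ f.support, monomial (redExp z m a) (coeff a f) with hgdef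
    have hfg : f - g ∈ torusBinomialSpan K z m := by
      have hsplit : f - g = ∑ a ∈ f.support,
          (monomial a (coeff a f) - monomial (redExp z m a) (coeff a f)) := by
        rw [hgdef, Finset.sum_sub_distrib, support_sum_monomial_coeff]
      rw [hsplit]
      refine Submodule.sum_mem _ fun a _ => ?_
      have heq : monomial a (coeff a f) - monomial (redExp z m a) (coeff a f)
          = C (coeff a f) * (monomial a 1 - monomial (redExp z m a) 1) := by
        rw [mul_sub, C_mul_monomial, C_mul_monomial, mul_one]
      rw [heq]
      exact Ideal.mul_mem_left _ _ (monomial_sub_red_mem z m a)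
    have hg_homog : g.IsHomogeneous d := by
      rw [hgdef]
      refine IsHomogeneous.sum _ _ _ fun a ha => ?_
      refine isHomogeneous_monomial _ ?_
      rw [redExp_degree, Finsupp.degree_eq_weight_one]
      exact hfd (mem_support_iff.mp ha)
    have hg_supp : ∀ b ∈ g.support, ∀ i : Fin s, i ≠ z → b i < Fintype.card K - 1 := by
      intro b hb i hi
      rw [hgdef] at hb
      obtain ⟨a, _, hba⟩ := Finset.mem_biUnion.mp (support_sum hb)
      have hb' : b = redExp z m a := by
        by_cases h0 : coeff a f = 0
        · rw [support_monomial, if_pos h0] at hba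
          exact absurd hba (Finset.notMem_empty b)
        · rw [support_monomial, if_neg h0] at hba
          exact Finset.mem_singleton.mp hba
      subst hb'
      exact redExp_lt z hm0 a hi
    have hg_van : ∀ x : Fin s → K, (∀ i, x i ≠ 0) → eval x g = 0 := by
      intro x hx
      have hker : torusBinomialSpan K z m ≤ RingHom.ker (eval x) := by
        rw [Ideal.span_le]
        rintro _ ⟨i, hi, rfl⟩
        rw [SetLike.mem_coe, RingHom.mem_ker, map_sub, map_pow, map_pow, eval_X, eval_X, hm,
          FiniteField.pow_card_sub_one_eq_one _ (hx i),
          FiniteField.pow_card_sub_one_eq_one _ (hx z), sub_self]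
      have h1 := hker hfg
      rw [RingHom.mem_ker, map_sub, hvan' x hx, zero_sub, neg_eq_zero] at h1
      exact h1
    have hg0 : g = 0 := reduced_homog_zero z hg_homog hg_supp hg_van
    have hfJ : f ∈ torusBinomialSpan K z m := by rwa [hg0, sub_zero] at hfg
    exact hfJ
  · rw [Ideal.span_le]
    rintro _ ⟨i, hi, rfl⟩
    refine Ideal.subset_span ⟨⟨1 * (Fintype.card K - 1), ?_⟩, ?_⟩
    · exact ((isHomogeneous_X K i).pow _).sub ((isHomogeneous_X K z).pow _)
    · intro P hP
      rw [map_sub, map_pow, map_pow, eval_X, eval_X,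
        FiniteField.pow_card_sub_one_eq_one _ (hP i),
        FiniteField.pow_card_sub_one_eq_one _ (hP z), sub_self]
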